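/- Let A be a real n×n matrix whose symmetric part C := (A + Aᵀ)/2 is positive definite. Then ∫_{ℝⁿ}∫_{ℝⁿ} [exp(−(x+iy)ᵀA(x−iy)/2) + exp(−(x−iy)ᵀA(x+iy)/2)] dx dy = 2(2π)ⁿ / det(A). In particular det(A) > 0. -/

import Mathlib

open MeasureTheory Matrix Complex Real

noncomputable section

namespace CGauss

variable {n : ℕ}

/-- transpose-swap for dot products -/
lemma dot_swap (N : Matrix (Fin n) (Fin n) ℝ) (v w : Fin n → ℝ) :
    v ⬝ᵥ N.mulVec w = w ⬝ᵥ Nᵀ.mulVec v := by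
  rw [Matrix.dotProduct_mulVec, Matrix.mulVec_transpose, dotProduct_comm]

lemma dot_conj (L N : Matrix (Fin n) (Fin n) ℝ) (u v : Fin n → ℝ) :
    u ⬝ᵥ (Lᵀ * N * L).mulVec v = (L.mulVec u) ⬝ᵥ (N.mulVec (L.mulVec v)) := by
  simp only [Matrix.dotProduct_mulVec, ← Matrix.vecMul_vecMul, Matrix.vecMul_transpose]

lemma dot_conj' (L N : Matrix (Fin n) (Fin n) ℝ) (u v : Fin n → ℝ) :
    u ⬝ᵥ (L * N * Lᵀ).mulVec v = (Lᵀ.mulVec u) ⬝ᵥ (N.mulVec (Lᵀ.mulVec v)) := by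
  have := dot_conj Lᵀ N u v
  rwa [Matrix.transpose_transpose] at this

lemma integrable_comp_mulVec {L : Matrix (Fin n) (Fin n) ℝ} (hL : L.det ≠ 0)
    {g : (Fin n → ℝ) → ℂ} (hg : Integrable g) :
    Integrable (fun x => g (L.mulVec x)) := by
  have hdet : LinearMap.det (Matrix.toLin' L) = L.det := LinearMap.det_toLin' L
  have hmap : Measure.map (Matrix.toLin' L) volume
      = ENNReal.ofReal |(L.det)⁻¹| • volume := by
    rw [Real.map_linearMap_volume_pi_eq_smul_volume_pi (by rw [hdet]; exact hL), hdet]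
  have hcont : Continuous (Matrix.toLin' L) := LinearMap.continuous_of_finiteDimensional _
  have hmeas : AEStronglyMeasurable g (Measure.map (Matrix.toLin' L) volume) := by
    rw [hmap]
    exact hg.aestronglyMeasurable.mono_ac (Measure.smul_absolutelyContinuous)
  have := (integrable_map_measure hmeas hcont.measurable.aemeasurable).mp ?_
  · simpa [Function.comp_def, Matrix.toLin'_apply] using this
  · rw [hmap]
    refine (integrable_smul_measure ?_ (by simp)).mpr hg
    simp [hL]

lemma integral_comp_mulVec {L : Matrix (Fin n) (Fin n) ℝ} (hL : L.det ≠ 0)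
    {g : (Fin n → ℝ) → ℂ} (hg : AEStronglyMeasurable g volume) :
    ∫ x, g (L.mulVec x) = |L.det|⁻¹ • ∫ x, g x := by
  have hdet : LinearMap.det (Matrix.toLin' L) = L.det := LinearMap.det_toLin' L
  have hmap : Measure.map (Matrix.toLin' L) volume
      = ENNReal.ofReal |(L.det)⁻¹| • volume := by
    rw [Real.map_linearMap_volume_pi_eq_smul_volume_pi (by rw [hdet]; exact hL), hdet]
  have hcont : Continuous (Matrix.toLin' L) := LinearMap.continuous_of_finiteDimensional _
  have hmeas : AEStronglyMeasurable g (Measure.map (Matrix.toLin' L) volume) := by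
    rw [hmap]
    exact hg.mono_ac (Measure.smul_absolutelyContinuous)
  have h1 : ∫ x, g (L.mulVec x) = ∫ y, g y ∂(Measure.map (Matrix.toLin' L) volume) := by
    rw [integral_map hcont.measurable.aemeasurable hmeas]
    simp [Matrix.toLin'_apply]
  rw [h1, hmap, integral_smul_measure, ENNReal.toReal_ofReal (abs_nonneg _), abs_inv]


section Gauss

variable {n : ℕ} {M : Matrix (Fin n) (Fin n) ℝ}

/-- the diagonalization data -/
lemma spectral (hM : M.PosDef) :
    ∃ U : Matrix (Fin n) (Fin n) ℝ, ∃ d : Fin n → ℝ,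
      (∀ i, 0 < d i) ∧ Uᵀ * U = 1 ∧ U * Uᵀ = 1 ∧ M = U * Matrix.diagonal d * Uᵀ ∧
      M.det = ∏ i, d i := by
  have hH := hM.isHermitian
  refine ⟨(hH.eigenvectorUnitary : Matrix (Fin n) (Fin n) ℝ), hH.eigenvalues,
    fun i => hM.eigenvalues_pos i, ?_, ?_, ?_, ?_⟩
  · have := (Unitary.mem_iff.mp hH.eigenvectorUnitary.2).1
    simpa [Matrix.star_eq_conjTranspose] using this
  · have := (Unitary.mem_iff.mp hH.eigenvectorUnitary.2).2
    simpa [Matrix.star_eq_conjTranspose] using this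
  · have := hH.spectral_theorem
    simpa [Matrix.star_eq_conjTranspose] using this
  · simpa using hH.det_eq_prod_eigenvalues


lemma gauss_exponent_comp {U : Matrix (Fin n) (Fin n) ℝ} {d : Fin n → ℝ}
    (hUU : Uᵀ * U = 1) (hUU' : U * Uᵀ = 1) (hMd : M = U * Matrix.diagonal d * Uᵀ)
    (w : Fin n → ℝ) (u : Fin n → ℝ) :
    Complex.exp (↑(-((U.mulVec u) ⬝ᵥ M.mulVec (U.mulVec u)) / 2)
        + Complex.I * ↑(w ⬝ᵥ (U.mulVec u)))
      = Complex.exp (- ∑ i, ((d i / 2 : ℝ) : ℂ) * (u i : ℂ) ^ 2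
        + ∑ i, (Complex.I * ((Uᵀ.mulVec w) i : ℂ)) * (u i : ℂ)) := by
  have hconj : Uᵀ * M * U = Matrix.diagonal d := by
    rw [hMd]
    calc Uᵀ * (U * Matrix.diagonal d * Uᵀ) * U
        = (Uᵀ * U) * Matrix.diagonal d * (Uᵀ * U) := by simp only [Matrix.mul_assoc]
      _ = Matrix.diagonal d := by rw [hUU]; simp
  have h1 : (U.mulVec u) ⬝ᵥ M.mulVec (U.mulVec u) = u ⬝ᵥ (Matrix.diagonal d).mulVec u := by
    rw [← dot_conj U M u u, hconj]
  have h2 : w ⬝ᵥ (U.mulVec u) = (Uᵀ.mulVec w) ⬝ᵥ u := by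
    rw [Matrix.dotProduct_mulVec, Matrix.mulVec_transpose]
  rw [h1, h2]
  congr 1
  have h3 : u ⬝ᵥ (Matrix.diagonal d).mulVec u = ∑ i, d i * u i ^ 2 := by
    simp [dotProduct, Matrix.mulVec_diagonal]
    exact Finset.sum_congr rfl fun i _ => by ring
  rw [h3]
  push_cast
  congr 1
  · rw [neg_div, Finset.sum_div]
    congr 1
    exact Finset.sum_congr rfl fun i _ => by ring
  · simp only [dotProduct]
    push_cast
    rw [Finset.mul_sum]
    exact Finset.sum_congr rfl fun i _ => by ring

lemma gauss_integrable (hM : M.PosDef) (w : Fin n → ℝ) :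
    Integrable (fun x : Fin n → ℝ =>
      Complex.exp (↑(-(x ⬝ᵥ M.mulVec x) / 2) + Complex.I * ↑(w ⬝ᵥ x))) := by
  obtain ⟨U, d, hd, hUU, hUU', hMd, hdet⟩ := spectral hM
  have hUdet : U.det ≠ 0 := by
    intro h
    have := congrArg Matrix.det hUU'
    rw [Matrix.det_mul, h, Matrix.det_one] at this
    simp at this
  have hbase : Integrable (fun u : Fin n → ℝ =>
      Complex.exp (- ∑ i, ((d i / 2 : ℝ) : ℂ) * (u i : ℂ) ^ 2
        + ∑ i, (Complex.I * ((Uᵀ.mulVec w) i : ℂ)) * (u i : ℂ))) := by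
    apply GaussianFourier.integrable_cexp_neg_sum_mul_add
    intro i
    simpa using half_pos (hd i)
  have hcomp := integrable_comp_mulVec (L := Uᵀ) (by simpa using hUdet) hbase
  have hfun : (fun x : Fin n → ℝ =>
      Complex.exp (↑(-(x ⬝ᵥ M.mulVec x) / 2) + Complex.I * ↑(w ⬝ᵥ x)))
      = fun x => Complex.exp (- ∑ i, ((d i / 2 : ℝ) : ℂ) * ((Uᵀ.mulVec x) i : ℂ) ^ 2
        + ∑ i, (Complex.I * ((Uᵀ.mulVec w) i : ℂ)) * ((Uᵀ.mulVec x) i : ℂ)) := by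
    funext x
    have hx : x = U.mulVec (Uᵀ.mulVec x) := by
      rw [Matrix.mulVec_mulVec, hUU', Matrix.one_mulVec]
    conv_lhs => rw [hx]
    exact gauss_exponent_comp hUU hUU' hMd w (Uᵀ.mulVec x)
  rw [hfun]
  exact hcomp


lemma gauss_integral (hM : M.PosDef) (w : Fin n → ℝ) :
    ∫ x : Fin n → ℝ, Complex.exp (↑(-(x ⬝ᵥ M.mulVec x) / 2) + Complex.I * ↑(w ⬝ᵥ x))
      = (Real.sqrt ((2 * Real.pi) ^ n / M.det) : ℂ)
        * Real.exp (-(w ⬝ᵥ M⁻¹.mulVec w) / 2) := by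
  obtain ⟨U, d, hd, hUU, hUU', hMd, hdet⟩ := spectral hM
  have hdne : ∀ i, d i ≠ 0 := fun i => (hd i).ne'
  have hUdet : U.det ≠ 0 := by
    intro h
    have := congrArg Matrix.det hUU'
    rw [Matrix.det_mul, h, Matrix.det_one] at this
    simp at this
  have habs : |U.det| = 1 := by
    have h2 : U.det * U.det = 1 := by
      have := congrArg Matrix.det hUU
      rwa [Matrix.det_mul, Matrix.det_transpose, Matrix.det_one] at this
    rcases mul_self_eq_one_iff.mp h2 with h | h <;> simp [h]
  set f := fun x : Fin n → ℝ =>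
    Complex.exp (↑(-(x ⬝ᵥ M.mulVec x) / 2) + Complex.I * ↑(w ⬝ᵥ x)) with hf
  have hcov := integral_comp_mulVec (L := U) hUdet
    (g := f) (gauss_integrable hM w).aestronglyMeasurable
  rw [habs, inv_one, one_smul] at hcov
  set w' := Uᵀ.mulVec w with hw'
  have hb : ∀ i, 0 < (((d i / 2 : ℝ) : ℂ)).re := fun i => by simpa using half_pos (hd i)
  have hdiag : ∫ x, f (U.mulVec x)
      = ∏ i, (↑Real.pi / ((d i / 2 : ℝ) : ℂ)) ^ (1/2 : ℂ)
          * Complex.exp ((Complex.I * (w' i : ℂ)) ^ 2 / (4 * ((d i / 2 : ℝ) : ℂ))) := by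
    rw [show (fun x => f (U.mulVec x)) = fun u : Fin n → ℝ =>
        Complex.exp (- ∑ i, ((d i / 2 : ℝ) : ℂ) * (u i : ℂ) ^ 2
          + ∑ i, (Complex.I * ((w' i : ℝ) : ℂ)) * (u i : ℂ)) from
      funext fun u => gauss_exponent_comp hUU hUU' hMd w u]
    exact GaussianFourier.integral_cexp_neg_sum_mul_add hb _
  -- inverse of M
  have hMinv : M⁻¹ = U * Matrix.diagonal (fun i => (d i)⁻¹) * Uᵀ := by
    apply Matrix.inv_eq_right_inv
    rw [hMd]
    calc (U * Matrix.diagonal d * Uᵀ) * (U * Matrix.diagonal (fun i => (d i)⁻¹) * Uᵀ)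
        = U * (Matrix.diagonal d * (Uᵀ * U) * Matrix.diagonal (fun i => (d i)⁻¹)) * Uᵀ := by
          simp only [Matrix.mul_assoc]
      _ = U * Uᵀ := by
          rw [hUU, Matrix.mul_one, Matrix.diagonal_mul_diagonal]
          simp [mul_inv_cancel₀, hdne]
      _ = 1 := hUU'
  have hquad : w ⬝ᵥ M⁻¹.mulVec w = ∑ i, w' i * ((d i)⁻¹ * w' i) := by
    rw [hMinv, dot_conj' U (Matrix.diagonal fun i => (d i)⁻¹) w w]
    simp [dotProduct, Matrix.mulVec_diagonal, hw']
  -- compute the two products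
  have hprodA : (∏ i, (↑Real.pi / ((d i / 2 : ℝ) : ℂ)) ^ (1/2 : ℂ))
      = ((Real.sqrt ((2 * Real.pi) ^ n / M.det) : ℝ) : ℂ) := by
    have h1 : ∀ i, (↑Real.pi / ((d i / 2 : ℝ) : ℂ)) ^ (1/2 : ℂ)
        = (((2 * Real.pi / d i) ^ ((1:ℝ)/2) : ℝ) : ℂ) := by
      intro i
      have := hd i
      rw [Complex.ofReal_cpow (by positivity) ((1:ℝ)/2)]
      push_cast
      rw [div_div_eq_mul_div]
      ring_nf
    simp only [h1, ← Complex.ofReal_prod]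
    congr 1
    rw [Real.finset_prod_rpow _ _ (fun i _ => by have := hd i; positivity) ((1:ℝ)/2)]
    rw [Finset.prod_div_distrib, Finset.prod_const, Finset.card_univ, Fintype.card_fin, ← hdet,
      Real.sqrt_eq_rpow]
  have hprodB : (∏ i, Complex.exp ((Complex.I * (w' i : ℂ)) ^ 2 / (4 * ((d i / 2 : ℝ) : ℂ))))
      = ((Real.exp (-(w ⬝ᵥ M⁻¹.mulVec w) / 2) : ℝ) : ℂ) := by
    rw [← Complex.exp_sum, Complex.ofReal_exp]
    congr 1
    rw [hquad]
    push_cast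
    rw [neg_div, Finset.sum_div, ← Finset.sum_neg_distrib]
    refine Finset.sum_congr rfl fun i _ => ?_
    have : ((d i : ℝ) : ℂ) ≠ 0 := by exact_mod_cast hdne i
    field_simp
    rw [Complex.I_sq]
    ring
  rw [← hcov, hdiag, Finset.prod_mul_distrib, hprodA, hprodB]

end Gauss


section Det

variable {n : ℕ}

lemma antisym_dot {B : Matrix (Fin n) (Fin n) ℝ} (hB : Bᵀ = -B) (v : Fin n → ℝ) :
    v ⬝ᵥ B.mulVec v = 0 := by
  have h := dot_swap B v v
  rw [hB, Matrix.neg_mulVec, dotProduct_neg] at h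
  linarith

lemma posdef_dot {C : Matrix (Fin n) (Fin n) ℝ} (hC : C.PosDef) {v : Fin n → ℝ} (hv : v ≠ 0) :
    0 < v ⬝ᵥ C.mulVec v := by
  have := hC.dotProduct_mulVec_pos hv
  simpa using this

lemma det_pos_aux {C B : Matrix (Fin n) (Fin n) ℝ} (hC : C.PosDef) (hB : Bᵀ = -B) :
    0 < (C + B).det := by
  set f : ℝ → ℝ := fun t => (C + t • B).det with hf
  have hcont : Continuous f := by
    apply Continuous.matrix_det
    exact continuous_const.add (continuous_id.smul continuous_const)
  have hne : ∀ t, f t ≠ 0 := by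
    intro t h
    obtain ⟨v, hv, hmul⟩ := (Matrix.exists_mulVec_eq_zero_iff).mpr h
    have h0 : v ⬝ᵥ (C + t • B).mulVec v = 0 := by rw [hmul, dotProduct_zero]
    have hBt : (t • B)ᵀ = -(t • B) := by rw [Matrix.transpose_smul, hB, smul_neg]
    rw [Matrix.add_mulVec, dotProduct_add, antisym_dot hBt v, add_zero] at h0
    exact (posdef_dot hC hv).ne' h0
  have h0 : 0 < f 0 := by
    have : f 0 = C.det := by simp [hf]
    rw [this]; exact hC.det_pos
  have h1 : f 1 = (C + B).det := by simp [hf]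
  rcases lt_trichotomy ((C + B).det) 0 with hlt | heq | hgt
  · exfalso
    have hmem : (0:ℝ) ∈ Set.Icc (f 1) (f 0) := by
      constructor
      · rw [h1]; linarith
      · linarith
    obtain ⟨t, _, hft⟩ := intermediate_value_Icc' (by norm_num : (0:ℝ) ≤ 1)
      hcont.continuousOn hmem
    exact hne t hft
  · exact absurd (h1.trans heq) (hne 1)
  · exact hgt

lemma det_identity {C B : Matrix (Fin n) (Fin n) ℝ} (hCd : C.det ≠ 0) (hCT : Cᵀ = C)
    (hB : Bᵀ = -B) :
    C.det * (C + B * C⁻¹ * Bᵀ).det = (C + B).det ^ 2 := by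
  have hCu : IsUnit C.det := hCd.isUnit
  have h1 : C⁻¹ * C = 1 := Matrix.nonsing_inv_mul C hCu
  have h2 : C * C⁻¹ = 1 := Matrix.mul_nonsing_inv C hCu
  have e : C + B * C⁻¹ * Bᵀ = (C - B) * C⁻¹ * (C + B) := by
    have e1 : (C - B) * C⁻¹ * (C + B)
        = C * C⁻¹ * C + C * C⁻¹ * B - B * (C⁻¹ * C) - B * C⁻¹ * B := by noncomm_ring
    rw [e1, h1, h2, one_mul, one_mul, mul_one, hB]
    noncomm_ring
  have h3 : (C - B).det = (C + B).det := by
    have : C - B = (C + B)ᵀ := by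
      rw [Matrix.transpose_add, hCT, hB, sub_eq_add_neg]
    rw [this, Matrix.det_transpose]
  rw [e, Matrix.det_mul, Matrix.det_mul, Matrix.det_nonsing_inv, h3,
    Ring.inverse_eq_inv']
  field_simp

end Det

end CGauss

open CGauss in
/-- For a real `n × n` matrix `A` whose symmetric part `(A + Aᵀ)/2` is
positive definite, the total mass of the complex Gaussian signed measure
`dμ_A(z) = (e^{−zᵀAz̄/2} + e^{−z̄ᵀAz/2}) dz` on `ℂⁿ ≃ ℝⁿ × ℝⁿ` equals `2(2π)ⁿ/det A`;
in particular `det A > 0`. -/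
theorem complex_gaussian_total_mass {n : ℕ} (A : Matrix (Fin n) (Fin n) ℝ)
    (hC : (((1 : ℝ) / 2) • (A + Aᵀ)).PosDef) :
    (∫ p : (Fin n → ℝ) × (Fin n → ℝ),
        (Complex.exp (-(∑ i, ∑ j, ((p.1 i : ℂ) + (p.2 i : ℂ) * Complex.I) * (A i j : ℂ) *
            ((p.1 j : ℂ) - (p.2 j : ℂ) * Complex.I)) / 2)
          + Complex.exp (-(∑ i, ∑ j, ((p.1 i : ℂ) - (p.2 i : ℂ) * Complex.I) * (A i j : ℂ) *
            ((p.1 j : ℂ) + (p.2 j : ℂ) * Complex.I)) / 2)))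
      = (2 * (2 * Real.pi) ^ n / A.det : ℂ) ∧ 0 < A.det := by
  classical
  set C : Matrix (Fin n) (Fin n) ℝ := ((1 : ℝ) / 2) • (A + Aᵀ) with hCdef
  set B : Matrix (Fin n) (Fin n) ℝ := ((1 : ℝ) / 2) • (A - Aᵀ) with hBdef
  have hCT : Cᵀ = C := by
    rw [hCdef, Matrix.transpose_smul, Matrix.transpose_add, Matrix.transpose_transpose,
      add_comm]
  have hBT : Bᵀ = -B := by
    rw [hBdef, Matrix.transpose_smul, Matrix.transpose_sub, Matrix.transpose_transpose]
    module
  have hA : C + B = A := by rw [hCdef, hBdef]; module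
  have hdetC : 0 < C.det := hC.det_pos
  have hdetA : 0 < A.det := by rw [← hA]; exact det_pos_aux hC hBT
  refine ⟨?_, hdetA⟩
  -- the matrix appearing in the outer integral
  set M₂ : Matrix (Fin n) (Fin n) ℝ := C + B * C⁻¹ * Bᵀ with hM₂def
  have hBH : Bᴴ = Bᵀ := by
    ext i j
    simp [Matrix.conjTranspose_apply]
  have hM₂ : M₂.PosDef := by
    rw [hM₂def]
    refine hC.add_posSemidef ?_
    have := (hC.inv.posSemidef).mul_mul_conjTranspose_same B
    rwa [hBH] at this
  have hdetM₂ : 0 < M₂.det := hM₂.det_pos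
  have hdetid : C.det * M₂.det = A.det ^ 2 := by
    rw [hM₂def, det_identity hdetC.ne' hCT hBT, hA]
  -- quadratic form identities
  have hqC : ∀ x : Fin n → ℝ, x ⬝ᵥ A.mulVec x = x ⬝ᵥ C.mulVec x := by
    intro x
    have h := dot_swap A x x
    rw [hCdef]
    rw [Matrix.smul_mulVec, dotProduct_smul, Matrix.add_mulVec, dotProduct_add,
      smul_eq_mul]
    linarith
  have hcross : ∀ x y : Fin n → ℝ,
      y ⬝ᵥ A.mulVec x - x ⬝ᵥ A.mulVec y = -(2 * ((Bᵀ.mulVec x) ⬝ᵥ y)) := by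
    intro x y
    have h4 : (Bᵀ.mulVec x) ⬝ᵥ y = x ⬝ᵥ B.mulVec y := by
      rw [dotProduct_comm, dot_swap, Matrix.transpose_transpose]
    have h5 : y ⬝ᵥ A.mulVec x = x ⬝ᵥ Aᵀ.mulVec y := dot_swap A y x
    rw [h4, h5, hBdef, Matrix.smul_mulVec, dotProduct_smul, Matrix.sub_mulVec,
      dotProduct_sub, smul_eq_mul]
    ring
  -- expansion of the complex double sums
  have hsum1 : ∀ x y : Fin n → ℝ,
      (∑ i, ∑ j, ((x i : ℂ) + (y i : ℂ) * Complex.I) * (A i j : ℂ) *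
        ((x j : ℂ) - (y j : ℂ) * Complex.I))
      = ↑(x ⬝ᵥ A.mulVec x) + ↑(y ⬝ᵥ A.mulVec y)
        + Complex.I * (↑(y ⬝ᵥ A.mulVec x) - ↑(x ⬝ᵥ A.mulVec y)) := by
    intro x y
    simp only [dotProduct, Matrix.mulVec, Finset.mul_sum]
    push_cast
    rw [← Finset.sum_sub_distrib, Finset.mul_sum, ← Finset.sum_add_distrib,
      ← Finset.sum_add_distrib]
    refine Finset.sum_congr rfl fun i _ => ?_
    rw [← Finset.sum_sub_distrib, Finset.mul_sum, ← Finset.sum_add_distrib,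
      ← Finset.sum_add_distrib]
    refine Finset.sum_congr rfl fun j _ => ?_
    linear_combination (-((y i : ℂ) * (A i j : ℂ) * (y j : ℂ))) * Complex.I_mul_I
  have hsum2 : ∀ x y : Fin n → ℝ,
      (∑ i, ∑ j, ((x i : ℂ) - (y i : ℂ) * Complex.I) * (A i j : ℂ) *
        ((x j : ℂ) + (y j : ℂ) * Complex.I))
      = ↑(x ⬝ᵥ A.mulVec x) + ↑(y ⬝ᵥ A.mulVec y)
        + Complex.I * (↑(x ⬝ᵥ A.mulVec y) - ↑(y ⬝ᵥ A.mulVec x)) := by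
    intro x y
    simp only [dotProduct, Matrix.mulVec, Finset.mul_sum]
    push_cast
    rw [← Finset.sum_sub_distrib, Finset.mul_sum, ← Finset.sum_add_distrib,
      ← Finset.sum_add_distrib]
    refine Finset.sum_congr rfl fun i _ => ?_
    rw [← Finset.sum_sub_distrib, Finset.mul_sum, ← Finset.sum_add_distrib,
      ← Finset.sum_add_distrib]
    refine Finset.sum_congr rfl fun j _ => ?_
    linear_combination (-((y i : ℂ) * (A i j : ℂ) * (y j : ℂ))) * Complex.I_mul_I
  have hkey1 : ∀ x y : Fin n → ℝ,
      -(∑ i, ∑ j, ((x i : ℂ) + (y i : ℂ) * Complex.I) * (A i j : ℂ) *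
        ((x j : ℂ) - (y j : ℂ) * Complex.I)) / 2
      = ↑(-(x ⬝ᵥ C.mulVec x) / 2)
        + (↑(-(y ⬝ᵥ C.mulVec y) / 2) + Complex.I * ↑((Bᵀ.mulVec x) ⬝ᵥ y)) := by
    intro x y
    rw [hsum1 x y]
    have h1C := congrArg (Complex.ofReal) (hqC x)
    have h2C := congrArg (Complex.ofReal) (hqC y)
    have h3C := congrArg (Complex.ofReal) (hcross x y)
    push_cast at h1C h2C h3C ⊢
    linear_combination (-(1:ℂ)/2) * h1C + (-(1:ℂ)/2) * h2C + (-(Complex.I)/2) * h3C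
  have hkey2 : ∀ x y : Fin n → ℝ,
      -(∑ i, ∑ j, ((x i : ℂ) - (y i : ℂ) * Complex.I) * (A i j : ℂ) *
        ((x j : ℂ) + (y j : ℂ) * Complex.I)) / 2
      = ↑(-(x ⬝ᵥ C.mulVec x) / 2)
        + (↑(-(y ⬝ᵥ C.mulVec y) / 2) + Complex.I * ↑((-(Bᵀ.mulVec x)) ⬝ᵥ y)) := by
    intro x y
    rw [hsum2 x y]
    have hneg : ((-(Bᵀ.mulVec x)) ⬝ᵥ y) = -((Bᵀ.mulVec x) ⬝ᵥ y) := by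
      rw [neg_dotProduct]
    rw [hneg]
    have h1C := congrArg (Complex.ofReal) (hqC x)
    have h2C := congrArg (Complex.ofReal) (hqC y)
    have h3C := congrArg (Complex.ofReal) (hcross x y)
    push_cast at h1C h2C h3C ⊢
    linear_combination (-(1:ℂ)/2) * h1C + (-(1:ℂ)/2) * h2C + ((Complex.I)/2) * h3C
  -- the rewritten integrand
  have hFeq : ∀ p : (Fin n → ℝ) × (Fin n → ℝ),
      (Complex.exp (-(∑ i, ∑ j, ((p.1 i : ℂ) + (p.2 i : ℂ) * Complex.I) * (A i j : ℂ) *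
          ((p.1 j : ℂ) - (p.2 j : ℂ) * Complex.I)) / 2)
        + Complex.exp (-(∑ i, ∑ j, ((p.1 i : ℂ) - (p.2 i : ℂ) * Complex.I) * (A i j : ℂ) *
          ((p.1 j : ℂ) + (p.2 j : ℂ) * Complex.I)) / 2))
      = Complex.exp (↑(-(p.1 ⬝ᵥ C.mulVec p.1) / 2)) *
          (Complex.exp (↑(-(p.2 ⬝ᵥ C.mulVec p.2) / 2)
              + Complex.I * ↑((Bᵀ.mulVec p.1) ⬝ᵥ p.2))
            + Complex.exp (↑(-(p.2 ⬝ᵥ C.mulVec p.2) / 2)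
              + Complex.I * ↑((-(Bᵀ.mulVec p.1)) ⬝ᵥ p.2))) := by
    intro p
    rw [hkey1 p.1 p.2, hkey2 p.1 p.2]
    simp only [Complex.exp_add]
    ring
  -- continuity of the integrand
  have hcontF : Continuous (fun p : (Fin n → ℝ) × (Fin n → ℝ) =>
      (Complex.exp (-(∑ i, ∑ j, ((p.1 i : ℂ) + (p.2 i : ℂ) * Complex.I) * (A i j : ℂ) *
          ((p.1 j : ℂ) - (p.2 j : ℂ) * Complex.I)) / 2)
        + Complex.exp (-(∑ i, ∑ j, ((p.1 i : ℂ) - (p.2 i : ℂ) * Complex.I) * (A i j : ℂ) *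
          ((p.1 j : ℂ) + (p.2 j : ℂ) * Complex.I)) / 2))) := by
    apply Continuous.add <;>
    · apply Complex.continuous_exp.comp
      apply Continuous.div_const
      apply Continuous.neg
      refine continuous_finset_sum _ fun i _ => continuous_finset_sum _ fun j _ => ?_
      fun_prop
  -- the Gaussian weight
  set e : (Fin n → ℝ) → ℝ := fun x => Real.exp (-(x ⬝ᵥ C.mulVec x) / 2) with hedef
  have he : Integrable e := by
    have h := (gauss_integrable hC 0).norm
    have heq : (fun x : Fin n → ℝ =>
        ‖Complex.exp (↑(-(x ⬝ᵥ C.mulVec x) / 2) + Complex.I * ↑((0 : Fin n → ℝ) ⬝ᵥ x))‖)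
        = e := by
      funext x
      simp [Complex.norm_exp, hedef]
    rwa [heq] at h
  -- integrability of the integrand on the product space
  have hFint : Integrable (fun p : (Fin n → ℝ) × (Fin n → ℝ) =>
      (Complex.exp (-(∑ i, ∑ j, ((p.1 i : ℂ) + (p.2 i : ℂ) * Complex.I) * (A i j : ℂ) *
          ((p.1 j : ℂ) - (p.2 j : ℂ) * Complex.I)) / 2)
        + Complex.exp (-(∑ i, ∑ j, ((p.1 i : ℂ) - (p.2 i : ℂ) * Complex.I) * (A i j : ℂ) *
          ((p.1 j : ℂ) + (p.2 j : ℂ) * Complex.I)) / 2)))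
      (volume.prod volume) := by
    refine Integrable.mono' ((he.mul_prod he).const_mul 2)
      ?_ (Filter.Eventually.of_forall fun p => ?_)
    · exact (hcontF.aestronglyMeasurable)
    · rw [hFeq p]
      have h1 : ‖Complex.exp (↑(-(p.1 ⬝ᵥ C.mulVec p.1) / 2) : ℂ)‖ = e p.1 := by
        simp [hedef, Complex.norm_exp]
      have h2 : ∀ t : ℝ, ‖Complex.exp (↑(-(p.2 ⬝ᵥ C.mulVec p.2) / 2)
          + Complex.I * (t : ℂ))‖ = e p.2 := by
        intro t
        simp [hedef, Complex.norm_exp]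
      calc ‖Complex.exp (↑(-(p.1 ⬝ᵥ C.mulVec p.1) / 2)) *
            (Complex.exp (↑(-(p.2 ⬝ᵥ C.mulVec p.2) / 2)
              + Complex.I * ↑((Bᵀ.mulVec p.1) ⬝ᵥ p.2))
            + Complex.exp (↑(-(p.2 ⬝ᵥ C.mulVec p.2) / 2)
              + Complex.I * ↑((-(Bᵀ.mulVec p.1)) ⬝ᵥ p.2)))‖
          ≤ e p.1 * (e p.2 + e p.2) := by
            rw [norm_mul, h1]
            gcongr
            refine (norm_add_le _ _).trans ?_
            rw [h2, h2]
      _ = 2 * (e p.1 * e p.2) := by ring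
  -- inner integral (over the second variable)
  have hinner : ∀ x : Fin n → ℝ,
      (∫ y : Fin n → ℝ,
        (Complex.exp (-(∑ i, ∑ j, ((x i : ℂ) + (y i : ℂ) * Complex.I) * (A i j : ℂ) *
            ((x j : ℂ) - (y j : ℂ) * Complex.I)) / 2)
          + Complex.exp (-(∑ i, ∑ j, ((x i : ℂ) - (y i : ℂ) * Complex.I) * (A i j : ℂ) *
            ((x j : ℂ) + (y j : ℂ) * Complex.I)) / 2)))
      = ((2 : ℂ) * (Real.sqrt ((2 * Real.pi) ^ n / C.det) : ℂ)) *
          Complex.exp (↑(-(x ⬝ᵥ M₂.mulVec x) / 2)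
            + Complex.I * ↑((0 : Fin n → ℝ) ⬝ᵥ x)) := by
    intro x
    have hw := gauss_integrable hC (Bᵀ.mulVec x)
    have hw' := gauss_integrable hC (-(Bᵀ.mulVec x))
    calc (∫ y : Fin n → ℝ,
        (Complex.exp (-(∑ i, ∑ j, ((x i : ℂ) + (y i : ℂ) * Complex.I) * (A i j : ℂ) *
            ((x j : ℂ) - (y j : ℂ) * Complex.I)) / 2)
          + Complex.exp (-(∑ i, ∑ j, ((x i : ℂ) - (y i : ℂ) * Complex.I) * (A i j : ℂ) *
            ((x j : ℂ) + (y j : ℂ) * Complex.I)) / 2)))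
        = ∫ y : Fin n → ℝ,
            Complex.exp (↑(-(x ⬝ᵥ C.mulVec x) / 2)) *
              (Complex.exp (↑(-(y ⬝ᵥ C.mulVec y) / 2)
                  + Complex.I * ↑((Bᵀ.mulVec x) ⬝ᵥ y))
                + Complex.exp (↑(-(y ⬝ᵥ C.mulVec y) / 2)
                  + Complex.I * ↑((-(Bᵀ.mulVec x)) ⬝ᵥ y))) := by
          refine integral_congr_ae (Filter.Eventually.of_forall fun y => ?_)
          exact hFeq (x, y)
      _ = Complex.exp (↑(-(x ⬝ᵥ C.mulVec x) / 2)) *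
            ((∫ y : Fin n → ℝ, Complex.exp (↑(-(y ⬝ᵥ C.mulVec y) / 2)
                + Complex.I * ↑((Bᵀ.mulVec x) ⬝ᵥ y)))
              + ∫ y : Fin n → ℝ, Complex.exp (↑(-(y ⬝ᵥ C.mulVec y) / 2)
                + Complex.I * ↑((-(Bᵀ.mulVec x)) ⬝ᵥ y))) := by
          rw [integral_const_mul _ _, integral_add hw hw']
      _ = ((2 : ℂ) * (Real.sqrt ((2 * Real.pi) ^ n / C.det) : ℂ)) *
            Complex.exp (↑(-(x ⬝ᵥ M₂.mulVec x) / 2)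
              + Complex.I * ↑((0 : Fin n → ℝ) ⬝ᵥ x)) := by
          rw [gauss_integral hC (Bᵀ.mulVec x), gauss_integral hC (-(Bᵀ.mulVec x))]
          have hsame : (-(Bᵀ.mulVec x)) ⬝ᵥ C⁻¹.mulVec (-(Bᵀ.mulVec x))
              = (Bᵀ.mulVec x) ⬝ᵥ C⁻¹.mulVec (Bᵀ.mulVec x) := by
            rw [Matrix.mulVec_neg, neg_dotProduct, dotProduct_neg, neg_neg]
          rw [hsame]
          have hquad : x ⬝ᵥ M₂.mulVec x
              = x ⬝ᵥ C.mulVec x + (Bᵀ.mulVec x) ⬝ᵥ C⁻¹.mulVec (Bᵀ.mulVec x) := by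
            rw [hM₂def, Matrix.add_mulVec, dotProduct_add, dot_conj' B C⁻¹ x x]
          rw [hquad]
          simp only [zero_dotProduct, Complex.ofReal_zero, mul_zero, add_zero]
          rw [show ((-(x ⬝ᵥ C.mulVec x + (Bᵀ.mulVec x) ⬝ᵥ C⁻¹.mulVec (Bᵀ.mulVec x)) / 2 : ℝ) : ℂ)
              = ↑(-(x ⬝ᵥ C.mulVec x) / 2)
                + ↑(-((Bᵀ.mulVec x) ⬝ᵥ C⁻¹.mulVec (Bᵀ.mulVec x)) / 2) from by push_cast; ring,
            Complex.exp_add, Complex.ofReal_exp]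
          ring
  -- Fubini and the outer integral
  rw [MeasureTheory.Measure.volume_eq_prod, MeasureTheory.integral_prod _ hFint]
  have houter : ∫ x : Fin n → ℝ, (∫ y : Fin n → ℝ,
        (Complex.exp (-(∑ i, ∑ j, ((x i : ℂ) + (y i : ℂ) * Complex.I) * (A i j : ℂ) *
            ((x j : ℂ) - (y j : ℂ) * Complex.I)) / 2)
          + Complex.exp (-(∑ i, ∑ j, ((x i : ℂ) - (y i : ℂ) * Complex.I) * (A i j : ℂ) *
            ((x j : ℂ) + (y j : ℂ) * Complex.I)) / 2)))
      = ∫ x : Fin n → ℝ, ((2 : ℂ) * (Real.sqrt ((2 * Real.pi) ^ n / C.det) : ℂ)) *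
          Complex.exp (↑(-(x ⬝ᵥ M₂.mulVec x) / 2)
            + Complex.I * ↑((0 : Fin n → ℝ) ⬝ᵥ x)) :=
    integral_congr_ae (Filter.Eventually.of_forall fun x => hinner x)
  rw [houter, integral_const_mul _ _, gauss_integral hM₂ 0]
  have hsq : Real.sqrt ((2 * Real.pi) ^ n / C.det) * Real.sqrt ((2 * Real.pi) ^ n / M₂.det)
      = (2 * Real.pi) ^ n / A.det := by
    rw [← Real.sqrt_mul (by positivity)]
    have h : (2 * Real.pi) ^ n / C.det * ((2 * Real.pi) ^ n / M₂.det)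
        = ((2 * Real.pi) ^ n / A.det) ^ 2 := by
      rw [div_mul_div_comm, hdetid, div_pow]
      congr 1
      ring
    rw [h, Real.sqrt_sq (by positivity)]
  simp only [zero_dotProduct, neg_zero, zero_div, Real.exp_zero]
  rw [Complex.ofReal_one, mul_one, mul_assoc, ← Complex.ofReal_mul, hsq]
  push_cast
  ring
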